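/- Under the assumptions $\lambda^*(X) > 0$, $\sigma_H^2(X) > 0$, and $\sum_x p(x)|\ln p(x)|^3 < \infty$, there exists $\delta^* > 0$ such that for all $\delta \in (0,\delta^*]$ and all positive integers $n$, $\Pr\{-\frac{1}{n}\ln p(X^n) > H(X)+\delta\} \leq e^{-n(\frac{\delta^2}{2\sigma_H^2(X)} + O(\delta^3))}$, where the $O(\delta^3)$ term is uniform in $n$. -/

import Mathlib

open scoped BigOperators

/-- The right rate function `r_X(δ) = sup_{λ≥0} [λ(H(X)+δ) - ln Σ_x p(x)^{1-λ}]`. -/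
noncomputable def rateR {α : Type*} (p : α → ℝ) (H δ : ℝ) : ℝ :=
  sSup {y : ℝ | ∃ l : ℝ, 0 ≤ l ∧ Summable (fun x => p x * p x ^ (-l)) ∧
      y = l * (H + δ) - Real.log (∑' x, p x * p x ^ (-l))}

lemma cube_le_exp' {s : ℝ} (hs : 0 ≤ s) : s ^ 3 ≤ 27 * Real.exp s := by
  have h1 : s / 3 + 1 ≤ Real.exp (s / 3) := Real.add_one_le_exp _
  have h2 : Real.exp (s / 3) ^ 3 = Real.exp s := by
    rw [← Real.exp_nat_mul]; congr 1; push_cast; ring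
  have h3 : (s / 3 + 1) ^ 3 ≤ Real.exp (s / 3) ^ 3 :=
    pow_le_pow_left₀ (by positivity) h1 3
  nlinarith [h3, hs]

lemma exp_cubic_bound' {t : ℝ} (ht : 0 ≤ t) :
    Real.exp t ≤ 1 + t + t ^ 2 / 2 + t ^ 3 * Real.exp t := by
  rcases le_or_gt t 1 with h1 | h1
  · have hb := Real.exp_bound (x := t) (by rw [abs_of_nonneg ht]; exact h1) (by norm_num : 0 < 3)
    have hsum : ∑ i ∈ Finset.range 3, t ^ i / (Nat.factorial i) = 1 + t + t ^ 2 / 2 := by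
      simp [Finset.sum_range_succ, Nat.factorial]
    rw [hsum, abs_of_nonneg ht] at hb
    have h2 := (abs_le.1 hb).2
    have hc : t ^ 3 * ((Nat.succ 3 : ℝ) / ((Nat.factorial 3) * 3)) ≤ t ^ 3 * 1 := by
      apply mul_le_mul_of_nonneg_left _ (by positivity)
      norm_num [Nat.factorial]
    have h4 : (1:ℝ) ≤ Real.exp t := by
      rw [← Real.exp_zero]; exact Real.exp_le_exp.2 ht
    nlinarith [mul_le_mul_of_nonneg_left h4 (pow_nonneg ht 3)]
  · have hcube : (0:ℝ) ≤ t ^ 3 - 1 := by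
      have := pow_le_pow_left₀ zero_le_one h1.le 3
      simp at this; linarith
    nlinarith [Real.exp_pos t, mul_nonneg hcube (Real.exp_pos t).le]

lemma log_cubic_bound' {u : ℝ} (hu : 0 ≤ u) :
    Real.log (1 + u) ≤ u - u ^ 2 / 2 + 2 * u ^ 3 := by
  rcases le_or_gt u (1/2) with h1 | h1
  · have hb := Real.abs_log_sub_add_sum_range_le (x := -u) (by rw [abs_neg, abs_of_nonneg hu]; linarith) 2
    have hsum : ∑ i ∈ Finset.range 2, (-u) ^ (i+1) / (i+1) = -u + u ^ 2 / 2 := by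
      simp [Finset.sum_range_succ]; ring
    rw [hsum, abs_neg, abs_of_nonneg hu] at hb
    have h3 : u ^ 3 / (1 - u) ≤ 2 * u ^ 3 := by
      rw [div_le_iff₀ (by linarith)]
      nlinarith [mul_nonneg (pow_nonneg hu 3) (by linarith : (0:ℝ) ≤ 1 - 2*u)]
    have h4 := (abs_le.1 hb).2
    have he : (1 : ℝ) + u = 1 - (-u) := by ring
    rw [he]
    have hp : u ^ (2+1) = u ^ 3 := by norm_num
    rw [hp] at h4
    nlinarith [h4, h3]
  · have h2 : Real.log (1 + u) ≤ (1 + u) - 1 := Real.log_le_sub_one_of_pos (by linarith)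
    nlinarith

lemma summable_and_tsum_pi' {α : Type} [Countable α] (f : α → ℝ)
    (hf0 : ∀ x, 0 ≤ f x) (hf : Summable f) (n : ℕ) :
    Summable (fun xs : Fin n → α => ∏ i, f (xs i)) ∧
      (∑' xs : Fin n → α, ∏ i, f (xs i)) = (∑' x, f x) ^ n := by
  induction n with
  | zero =>
    haveI : Unique (Fin 0 → α) := ⟨⟨fun i => i.elim0⟩, fun g => funext fun i => i.elim0⟩
    constructor
    · exact ⟨_, hasSum_fintype _⟩
    · simp [tsum_fintype]
  | succ n ih =>
    obtain ⟨ihs, ihe⟩ := ih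
    have hF : Summable (fun q : α × (Fin n → α) => f q.1 * ∏ i, f (q.2 i)) :=
      @Summable.mul_of_nonneg α (Fin n → α) f (fun xs : Fin n → α => ∏ i, f (xs i)) hf ihs
        (fun x => hf0 x) (fun ys => Finset.prod_nonneg fun i _ => hf0 _)
    set e : (Fin (n+1) → α) ≃ α × (Fin n → α) := (Fin.consEquiv (fun _ : Fin (n+1) => α)).symm with he
    have hcomp : ∀ xs : Fin (n+1) → α, f ((e xs).1) * ∏ i, f ((e xs).2 i) = ∏ i, f (xs i) := by
      intro xs; rw [Fin.prod_univ_succ]; rfl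
    have hsum1 : Summable (fun xs : Fin (n+1) → α => ∏ i, f (xs i)) := by
      have h := (e.summable_iff (f := fun q : α × (Fin n → α) => f q.1 * ∏ i, f (q.2 i))).2 hF
      exact h.congr hcomp
    refine ⟨hsum1, ?_⟩
    calc (∑' xs : Fin (n+1) → α, ∏ i, f (xs i))
        = ∑' xs : Fin (n+1) → α, f ((e xs).1) * ∏ i, f ((e xs).2 i) :=
          tsum_congr fun xs => (hcomp xs).symm
      _ = ∑' q : α × (Fin n → α), f q.1 * ∏ i, f (q.2 i) :=
          e.tsum_eq (fun q : α × (Fin n → α) => f q.1 * ∏ i, f (q.2 i))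
      _ = ∑' a : α, ∑' ys : Fin n → α, f a * ∏ i, f (ys i) :=
          Summable.tsum_prod' hF (fun a => ihs.mul_left (f a))
      _ = ∑' a : α, f a * ∑' ys : Fin n → α, ∏ i, f (ys i) := tsum_congr fun a => tsum_mul_left
      _ = (∑' x, f x) ^ (n+1) := by rw [ihe, tsum_mul_right]; ring

set_option maxHeartbeats 3000000 in
theorem stmt2 {α : Type} [Countable α] (p : α → ℝ)
    (hp0 : ∀ x, 0 ≤ p x) (hp1 : HasSum p 1)
    (H S2 : ℝ)
    (hH : HasSum (fun x => p x * (-Real.log (p x))) H)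
    (hS2 : HasSum (fun x => p x * (Real.log (p x)) ^ 2) S2)
    (hlstar : ∃ l : ℝ, 0 < l ∧ Summable (fun x => p x * p x ^ (-l)))
    (hvar : 0 < S2 - H ^ 2)
    (hM3 : Summable (fun x => p x * |Real.log (p x)| ^ 3)) :
    ∃ δstar > (0 : ℝ), ∃ K > (0 : ℝ), ∀ δ : ℝ, 0 < δ → δ ≤ δstar →
      ∀ n : ℕ, 0 < n →
      (∑' xs : Fin n → α,
          Set.indicator {xs : Fin n → α |
              -(1 / (n : ℝ)) * Real.log (∏ i, p (xs i)) > H + δ}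
            (fun xs => ∏ i, p (xs i)) xs)
        ≤ Real.exp (-(n : ℝ) * (δ ^ 2 / (2 * (S2 - H ^ 2)) - K * δ ^ 3)) := by
  classical
  obtain ⟨l0, hl0, hl0sum⟩ := hlstar
  have hple : ∀ x, p x ≤ 1 := fun x => le_hasSum hp1 x (fun j _ => hp0 j)
  have hLnn : ∀ x, 0 ≤ -Real.log (p x) := fun x =>
    neg_nonneg.2 (Real.log_nonpos (hp0 x) (hple x))
  have hg0eq : (fun x => p x * p x ^ (-l0)) =
      fun x => p x * Real.exp (l0 * -Real.log (p x)) := by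
    funext x
    rcases (hp0 x).eq_or_lt with h | h
    · rw [← h]; ring
    · rw [Real.rpow_def_of_pos h]
      congr 1
      ring
  have hg0sum : Summable (fun x => p x * Real.exp (l0 * -Real.log (p x))) := hg0eq ▸ hl0sum
  have hg0nn : ∀ x, 0 ≤ p x * Real.exp (l0 * -Real.log (p x)) := fun x =>
    mul_nonneg (hp0 x) (Real.exp_pos _).le
  have hΛ0nn : 0 ≤ ∑' x, p x * Real.exp (l0 * -Real.log (p x)) := tsum_nonneg hg0nn
  have hHnn : 0 ≤ H := hH.tsum_eq ▸ tsum_nonneg (fun x => mul_nonneg (hp0 x) (hLnn x))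
  have hS2nn : 0 ≤ S2 := hS2.tsum_eq ▸ tsum_nonneg (fun x => mul_nonneg (hp0 x) (sq_nonneg _))
  have hM'nn : 0 ≤ 216/l0^3 * ∑' x, p x * Real.exp (l0 * -Real.log (p x)) :=
    mul_nonneg (by positivity) hΛ0nn
  have hBnn : 0 ≤ H + l0/2*(S2/2) + (l0/2)^2*(216/l0^3 * ∑' x, p x * Real.exp (l0 * -Real.log (p x))) := by
    have h1 : 0 ≤ l0/2*(S2/2) := by positivity
    have h2 : 0 ≤ (l0/2)^2*(216/l0^3 * ∑' x, p x * Real.exp (l0 * -Real.log (p x))) :=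
      mul_nonneg (by positivity) hM'nn
    linarith
  have hCnn : 0 ≤ (216/l0^3 * ∑' x, p x * Real.exp (l0 * -Real.log (p x)))
      + 2*(H + l0/2*(S2/2) + (l0/2)^2*(216/l0^3 * ∑' x, p x * Real.exp (l0 * -Real.log (p x))))^3 := by
    have := pow_nonneg hBnn 3
    linarith
  refine ⟨l0/2 * (S2 - H^2), mul_pos (by linarith) hvar,
    ((216/l0^3 * ∑' x, p x * Real.exp (l0 * -Real.log (p x)))
      + 2*(H + l0/2*(S2/2) + (l0/2)^2*(216/l0^3 * ∑' x, p x * Real.exp (l0 * -Real.log (p x))))^3)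
      / (S2 - H^2)^3 + 1, ?_, ?_⟩
  · have h1 : 0 ≤ ((216/l0^3 * ∑' x, p x * Real.exp (l0 * -Real.log (p x)))
      + 2*(H + l0/2*(S2/2) + (l0/2)^2*(216/l0^3 * ∑' x, p x * Real.exp (l0 * -Real.log (p x))))^3)
      / (S2 - H^2)^3 := div_nonneg hCnn (pow_nonneg hvar.le 3)
    linarith
  intro δ hδ0 hδle n hn
  have hlam0 : 0 < δ / (S2 - H^2) := div_pos hδ0 hvar
  have hlamle : δ / (S2 - H^2) ≤ l0/2 := by
    rw [div_le_iff₀ hvar]; linarith [hδle]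
  have hlaml0 : δ / (S2 - H^2) ≤ l0 := le_trans hlamle (by linarith)
  set lam : ℝ := δ / (S2 - H^2) with hlamdef
  -- summability of the tilted distribution
  have hgnn : ∀ x, 0 ≤ p x * Real.exp (lam * -Real.log (p x)) := fun x =>
    mul_nonneg (hp0 x) (Real.exp_pos _).le
  have hgle : ∀ x, p x * Real.exp (lam * -Real.log (p x)) ≤ p x * Real.exp (l0 * -Real.log (p x)) :=
    fun x => mul_le_mul_of_nonneg_left
      (Real.exp_le_exp.2 (mul_le_mul_of_nonneg_right hlaml0 (hLnn x))) (hp0 x)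
  have hgsum : Summable (fun x => p x * Real.exp (lam * -Real.log (p x))) :=
    Summable.of_nonneg_of_le hgnn hgle hg0sum
  -- pointwise Taylor expansion bound
  have hexpand : ∀ x, p x * Real.exp (lam * -Real.log (p x)) ≤
      (p x + lam * (p x * -Real.log (p x)) + lam^2/2 * (p x * (Real.log (p x))^2))
        + lam^3 * (216/l0^3 * (p x * Real.exp (l0 * -Real.log (p x)))) := by
    intro x
    have hLn : 0 ≤ -Real.log (p x) := hLnn x
    have h1 := exp_cubic_bound' (t := lam * -Real.log (p x)) (mul_nonneg hlam0.le hLn)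
    have h2 : p x * Real.exp (lam * -Real.log (p x)) ≤
        p x * (1 + lam * -Real.log (p x) + (lam * -Real.log (p x))^2/2
          + (lam * -Real.log (p x))^3 * Real.exp (lam * -Real.log (p x))) :=
      mul_le_mul_of_nonneg_left h1 (hp0 x)
    have h3 : (-Real.log (p x))^3 ≤ 216/l0^3 * Real.exp (l0/2 * -Real.log (p x)) := by
      have hcu := cube_le_exp' (s := l0/2 * -Real.log (p x)) (mul_nonneg (by linarith) hLn)
      have hl0' : (0:ℝ) < l0^3 := by positivity
      have hstep : l0^3 * (-Real.log (p x))^3 ≤ 216 * Real.exp (l0/2 * -Real.log (p x)) := by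
        nlinarith [hcu]
      calc (-Real.log (p x))^3 = (l0^3 * (-Real.log (p x))^3)/l0^3 := by field_simp
        _ ≤ (216 * Real.exp (l0/2 * -Real.log (p x)))/l0^3 := by gcongr
        _ = 216/l0^3 * Real.exp (l0/2 * -Real.log (p x)) := by ring
    have h4 : Real.exp (lam * -Real.log (p x)) ≤ Real.exp (l0/2 * -Real.log (p x)) :=
      Real.exp_le_exp.2 (mul_le_mul_of_nonneg_right hlamle hLn)
    have h5 : (-Real.log (p x))^3 * Real.exp (lam * -Real.log (p x)) ≤
        216/l0^3 * Real.exp (l0 * -Real.log (p x)) := by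
      calc (-Real.log (p x))^3 * Real.exp (lam * -Real.log (p x))
          ≤ (216/l0^3 * Real.exp (l0/2 * -Real.log (p x))) * Real.exp (l0/2 * -Real.log (p x)) := by
            apply mul_le_mul h3 h4 (Real.exp_pos _).le
            positivity
        _ = 216/l0^3 * Real.exp (l0 * -Real.log (p x)) := by
            rw [mul_assoc, ← Real.exp_add]
            congr 2
            ring
    have h6 : p x * ((-Real.log (p x))^3 * Real.exp (lam * -Real.log (p x))) ≤
        p x * (216/l0^3 * Real.exp (l0 * -Real.log (p x))) :=
      mul_le_mul_of_nonneg_left h5 (hp0 x)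
    have hsq : (Real.log (p x))^2 = (-Real.log (p x))^2 := (neg_sq _).symm
    rw [hsq]
    nlinarith [h2, h6, pow_nonneg hlam0.le 3]
  -- summability of expansion pieces
  have hsum1 : Summable (fun x => p x * -Real.log (p x)) := hH.summable
  have hsum2 : Summable (fun x => p x * (Real.log (p x))^2) := hS2.summable
  have hsA : Summable (fun x => p x + lam * (p x * -Real.log (p x))) :=
    hp1.summable.add (hsum1.mul_left lam)
  have hsB : Summable (fun x => p x + lam * (p x * -Real.log (p x))
      + lam^2/2 * (p x * (Real.log (p x))^2)) := hsA.add (hsum2.mul_left (lam^2/2))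
  have hsC : Summable (fun x => lam^3 * (216/l0^3 * (p x * Real.exp (l0 * -Real.log (p x))))) :=
    (hg0sum.mul_left (216/l0^3)).mul_left (lam^3)
  have hsD : Summable (fun x => (p x + lam * (p x * -Real.log (p x))
      + lam^2/2 * (p x * (Real.log (p x))^2))
        + lam^3 * (216/l0^3 * (p x * Real.exp (l0 * -Real.log (p x))))) := hsB.add hsC
  have hsplit : (∑' x, ((p x + lam * (p x * -Real.log (p x))
      + lam^2/2 * (p x * (Real.log (p x))^2))
        + lam^3 * (216/l0^3 * (p x * Real.exp (l0 * -Real.log (p x)))))) =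
      1 + (lam * H + lam^2/2 * S2
        + lam^3 * (216/l0^3 * ∑' x, p x * Real.exp (l0 * -Real.log (p x)))) := by
    rw [Summable.tsum_add hsB hsC, Summable.tsum_add hsA (hsum2.mul_left (lam^2/2)),
      Summable.tsum_add hp1.summable (hsum1.mul_left lam),
      tsum_mul_left, tsum_mul_left, tsum_mul_left, tsum_mul_left,
      hp1.tsum_eq, hH.tsum_eq, hS2.tsum_eq]
    ring
  have hΛle : (∑' x, p x * Real.exp (lam * -Real.log (p x))) ≤
      1 + (lam * H + lam^2/2 * S2
        + lam^3 * (216/l0^3 * ∑' x, p x * Real.exp (l0 * -Real.log (p x)))) := by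
    rw [← hsplit]
    exact Summable.tsum_le_tsum hexpand hgsum hsD
  -- abbreviations as plain reals
  have hU0 : 0 ≤ lam * H + lam^2/2 * S2
      + lam^3 * (216/l0^3 * ∑' x, p x * Real.exp (l0 * -Real.log (p x))) := by
    have h1 : 0 ≤ lam * H := mul_nonneg hlam0.le hHnn
    have h2 : 0 ≤ lam^2/2 * S2 := mul_nonneg (by positivity) hS2nn
    have h3 : 0 ≤ lam^3 * (216/l0^3 * ∑' x, p x * Real.exp (l0 * -Real.log (p x))) :=
      mul_nonneg (by positivity) hM'nn
    linarith
  have hUlow : lam * H ≤ lam * H + lam^2/2 * S2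
      + lam^3 * (216/l0^3 * ∑' x, p x * Real.exp (l0 * -Real.log (p x))) := by
    have h2 : 0 ≤ lam^2/2 * S2 := mul_nonneg (by positivity) hS2nn
    have h3 : 0 ≤ lam^3 * (216/l0^3 * ∑' x, p x * Real.exp (l0 * -Real.log (p x))) :=
      mul_nonneg (by positivity) hM'nn
    linarith
  have hUB : lam * H + lam^2/2 * S2
      + lam^3 * (216/l0^3 * ∑' x, p x * Real.exp (l0 * -Real.log (p x))) ≤
      lam * (H + l0/2*(S2/2) + (l0/2)^2*(216/l0^3 * ∑' x, p x * Real.exp (l0 * -Real.log (p x)))) := by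
    have c1 : lam^2/2 * S2 ≤ lam * (l0/2*(S2/2)) := by
      nlinarith [mul_nonneg (mul_nonneg hlam0.le (sub_nonneg.2 hlamle)) hS2nn]
    have c2 : lam^3 * (216/l0^3 * ∑' x, p x * Real.exp (l0 * -Real.log (p x))) ≤
        lam * ((l0/2)^2*(216/l0^3 * ∑' x, p x * Real.exp (l0 * -Real.log (p x)))) := by
      nlinarith [mul_nonneg (mul_nonneg hlam0.le
        (mul_nonneg (sub_nonneg.2 hlamle) (by linarith : (0:ℝ) ≤ lam + l0/2))) hM'nn]
    nlinarith [c1, c2]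
  have hΛexp : (∑' x, p x * Real.exp (lam * -Real.log (p x))) ≤
      Real.exp (lam*H + lam^2*(S2-H^2)/2
        + lam^3*((216/l0^3 * ∑' x, p x * Real.exp (l0 * -Real.log (p x)))
          + 2*(H + l0/2*(S2/2) + (l0/2)^2*(216/l0^3 * ∑' x, p x * Real.exp (l0 * -Real.log (p x))))^3)) := by
    have h1p : (0:ℝ) < 1 + (lam * H + lam^2/2 * S2
        + lam^3 * (216/l0^3 * ∑' x, p x * Real.exp (l0 * -Real.log (p x)))) := by linarith
    have hlog := log_cubic_bound' hU0
    have hU2 : lam^2 * H^2 ≤ (lam * H + lam^2/2 * S2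
        + lam^3 * (216/l0^3 * ∑' x, p x * Real.exp (l0 * -Real.log (p x))))^2 := by
      nlinarith [mul_nonneg (sub_nonneg.2 hUlow) (add_nonneg hU0 (mul_nonneg hlam0.le hHnn))]
    have hU3 : (lam * H + lam^2/2 * S2
        + lam^3 * (216/l0^3 * ∑' x, p x * Real.exp (l0 * -Real.log (p x))))^3 ≤
        lam^3 * (H + l0/2*(S2/2) + (l0/2)^2*(216/l0^3 * ∑' x, p x * Real.exp (l0 * -Real.log (p x))))^3 := by
      have := pow_le_pow_left₀ hU0 hUB 3
      calc (lam * H + lam^2/2 * S2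
          + lam^3 * (216/l0^3 * ∑' x, p x * Real.exp (l0 * -Real.log (p x))))^3
          ≤ (lam * (H + l0/2*(S2/2) + (l0/2)^2*(216/l0^3 * ∑' x, p x * Real.exp (l0 * -Real.log (p x)))))^3 := this
        _ = lam^3 * (H + l0/2*(S2/2) + (l0/2)^2*(216/l0^3 * ∑' x, p x * Real.exp (l0 * -Real.log (p x))))^3 := by ring
    calc (∑' x, p x * Real.exp (lam * -Real.log (p x)))
        ≤ 1 + (lam * H + lam^2/2 * S2
          + lam^3 * (216/l0^3 * ∑' x, p x * Real.exp (l0 * -Real.log (p x)))) := hΛle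
      _ = Real.exp (Real.log (1 + (lam * H + lam^2/2 * S2
          + lam^3 * (216/l0^3 * ∑' x, p x * Real.exp (l0 * -Real.log (p x)))))) :=
          (Real.exp_log h1p).symm
      _ ≤ _ := by
          apply Real.exp_le_exp.2
          nlinarith [hlog, hU2, hU3]
  -- the key exponent inequality
  have hVne : (S2 - H^2) ≠ 0 := hvar.ne'
  have hkey : lam*H + lam^2*(S2-H^2)/2
      + lam^3*((216/l0^3 * ∑' x, p x * Real.exp (l0 * -Real.log (p x)))
        + 2*(H + l0/2*(S2/2) + (l0/2)^2*(216/l0^3 * ∑' x, p x * Real.exp (l0 * -Real.log (p x))))^3) ≤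
      lam*(H+δ) - (δ^2/(2*(S2-H^2)) - (((216/l0^3 * ∑' x, p x * Real.exp (l0 * -Real.log (p x)))
        + 2*(H + l0/2*(S2/2) + (l0/2)^2*(216/l0^3 * ∑' x, p x * Real.exp (l0 * -Real.log (p x))))^3)
        / (S2 - H^2)^3 + 1) * δ^3) := by
    have hid : lam*(H+δ) - (δ^2/(2*(S2-H^2)) - (((216/l0^3 * ∑' x, p x * Real.exp (l0 * -Real.log (p x)))
        + 2*(H + l0/2*(S2/2) + (l0/2)^2*(216/l0^3 * ∑' x, p x * Real.exp (l0 * -Real.log (p x))))^3)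
        / (S2 - H^2)^3 + 1) * δ^3)
        - (lam*H + lam^2*(S2-H^2)/2
          + lam^3*((216/l0^3 * ∑' x, p x * Real.exp (l0 * -Real.log (p x)))
            + 2*(H + l0/2*(S2/2) + (l0/2)^2*(216/l0^3 * ∑' x, p x * Real.exp (l0 * -Real.log (p x))))^3)) = δ^3 := by
      rw [hlamdef]
      field_simp
      ring_nf
    nlinarith [hid, pow_nonneg hδ0.le 3]
  have hΛfinal : (∑' x, p x * Real.exp (lam * -Real.log (p x))) ≤
      Real.exp (lam*(H+δ) - (δ^2/(2*(S2-H^2)) - (((216/l0^3 * ∑' x, p x * Real.exp (l0 * -Real.log (p x)))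
        + 2*(H + l0/2*(S2/2) + (l0/2)^2*(216/l0^3 * ∑' x, p x * Real.exp (l0 * -Real.log (p x))))^3)
        / (S2 - H^2)^3 + 1) * δ^3)) :=
    hΛexp.trans (Real.exp_le_exp.2 hkey)
  -- product space
  obtain ⟨hPsum, hPeq⟩ := summable_and_tsum_pi'
    (fun x => p x * Real.exp (lam * -Real.log (p x))) hgnn hgsum n
  -- pointwise Chernoff bound
  have hpt : ∀ xs : Fin n → α,
      Set.indicator {xs : Fin n → α |
          -(1 / (n : ℝ)) * Real.log (∏ i, p (xs i)) > H + δ}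
        (fun xs => ∏ i, p (xs i)) xs ≤
      Real.exp (-(lam * ((n:ℝ) * (H + δ)))) * ∏ i, p (xs i) * Real.exp (lam * -Real.log (p (xs i))) := by
    intro xs
    have hRnn : 0 ≤ Real.exp (-(lam * ((n:ℝ) * (H + δ)))) *
        ∏ i, p (xs i) * Real.exp (lam * -Real.log (p (xs i))) :=
      mul_nonneg (Real.exp_pos _).le (Finset.prod_nonneg fun i _ => hgnn _)
    by_cases hmem : xs ∈ {xs : Fin n → α |
        -(1 / (n : ℝ)) * Real.log (∏ i, p (xs i)) > H + δ}
    · rw [Set.indicator_of_mem hmem]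
      by_cases hz : ∀ i, p (xs i) ≠ 0
      · have hlogp : Real.log (∏ i, p (xs i)) = ∑ i, Real.log (p (xs i)) :=
          Real.log_prod fun i _ => hz i
        have hmem' : H + δ < -(1 / (n : ℝ)) * ∑ i, Real.log (p (xs i)) := by
          rw [← hlogp]; exact hmem
        have hn' : (0:ℝ) < n := by exact_mod_cast hn
        have hS : (n:ℝ) * (H+δ) < ∑ i, -Real.log (p (xs i)) := by
          have h2 : (n:ℝ) * (H + δ) < (n:ℝ) * (-(1/(n:ℝ)) * ∑ i, Real.log (p (xs i))) :=
            (mul_lt_mul_iff_right₀ hn').2 hmem'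
          have h3 : (n:ℝ) * (-(1/(n:ℝ)) * ∑ i, Real.log (p (xs i))) =
              -∑ i, Real.log (p (xs i)) := by
            field_simp
          have h4 : (∑ i, -Real.log (p (xs i))) = -∑ i, Real.log (p (xs i)) := by
            rw [Finset.sum_neg_distrib]
          linarith [h2, h3.le, h3.ge]
        have hppos : 0 < ∏ i, p (xs i) :=
          Finset.prod_pos fun i _ => lt_of_le_of_ne (hp0 _) (Ne.symm (hz i))
        have hfac : (0:ℝ) ≤ lam * (∑ i, -Real.log (p (xs i))) - lam * ((n:ℝ)*(H+δ)) := by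
          have := mul_le_mul_of_nonneg_left hS.le hlam0.le
          linarith
        have hexp1 : (1:ℝ) ≤ Real.exp (lam * (∑ i, -Real.log (p (xs i))) - lam * ((n:ℝ)*(H+δ))) := by
          rw [← Real.exp_zero]; exact Real.exp_le_exp.2 hfac
        calc ∏ i, p (xs i) = (∏ i, p (xs i)) * 1 := (mul_one _).symm
          _ ≤ (∏ i, p (xs i)) *
              Real.exp (lam * (∑ i, -Real.log (p (xs i))) - lam * ((n:ℝ)*(H+δ))) :=
            mul_le_mul_of_nonneg_left hexp1 hppos.le
          _ = Real.exp (-(lam * ((n:ℝ) * (H + δ)))) *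
              ∏ i, p (xs i) * Real.exp (lam * -Real.log (p (xs i))) := by
            rw [Finset.prod_mul_distrib, ← Real.exp_sum, ← Finset.mul_sum]
            rw [show lam * (∑ i, -Real.log (p (xs i))) - lam * ((n:ℝ)*(H+δ)) =
              -(lam * ((n:ℝ) * (H + δ))) + lam * ∑ i, -Real.log (p (xs i)) from by ring]
            rw [Real.exp_add]
            ring
      · push_neg at hz
        obtain ⟨i0, hi0⟩ := hz
        rw [Finset.prod_eq_zero (Finset.mem_univ i0) hi0]
        exact hRnn
    · rw [Set.indicator_of_notMem hmem]
      exact hRnn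
  have hind_nn : ∀ xs : Fin n → α, 0 ≤ Set.indicator {xs : Fin n → α |
      -(1 / (n : ℝ)) * Real.log (∏ i, p (xs i)) > H + δ}
        (fun xs => ∏ i, p (xs i)) xs := fun xs =>
    Set.indicator_nonneg (fun ys _ => Finset.prod_nonneg fun i _ => hp0 _) xs
  have hRHSsum2 : Summable (fun xs : Fin n → α =>
      Real.exp (-(lam * ((n:ℝ) * (H + δ)))) *
        ∏ i, p (xs i) * Real.exp (lam * -Real.log (p (xs i)))) :=
    hPsum.mul_left _
  have hind_sum : Summable (fun xs : Fin n → α => Set.indicator {xs : Fin n → α |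
      -(1 / (n : ℝ)) * Real.log (∏ i, p (xs i)) > H + δ}
        (fun xs => ∏ i, p (xs i)) xs) :=
    Summable.of_nonneg_of_le hind_nn hpt hRHSsum2
  calc (∑' xs : Fin n → α, Set.indicator {xs : Fin n → α |
          -(1 / (n : ℝ)) * Real.log (∏ i, p (xs i)) > H + δ}
        (fun xs => ∏ i, p (xs i)) xs)
      ≤ ∑' xs : Fin n → α, Real.exp (-(lam * ((n:ℝ) * (H + δ)))) *
          ∏ i, p (xs i) * Real.exp (lam * -Real.log (p (xs i))) :=
        Summable.tsum_le_tsum hpt hind_sum hRHSsum2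
    _ = Real.exp (-(lam * ((n:ℝ) * (H + δ)))) *
          (∑' x, p x * Real.exp (lam * -Real.log (p x))) ^ n := by
        rw [tsum_mul_left, hPeq]
    _ ≤ Real.exp (-(lam * ((n:ℝ) * (H + δ)))) *
          (Real.exp (lam*(H+δ) - (δ^2/(2*(S2-H^2)) - (((216/l0^3 * ∑' x, p x * Real.exp (l0 * -Real.log (p x)))
            + 2*(H + l0/2*(S2/2) + (l0/2)^2*(216/l0^3 * ∑' x, p x * Real.exp (l0 * -Real.log (p x))))^3)
            / (S2 - H^2)^3 + 1) * δ^3))) ^ n := by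
        apply mul_le_mul_of_nonneg_left _ (Real.exp_pos _).le
        exact pow_le_pow_left₀ (tsum_nonneg hgnn) hΛfinal n
    _ = Real.exp (-(n : ℝ) * (δ ^ 2 / (2 * (S2 - H ^ 2)) -
          (((216/l0^3 * ∑' x, p x * Real.exp (l0 * -Real.log (p x)))
            + 2*(H + l0/2*(S2/2) + (l0/2)^2*(216/l0^3 * ∑' x, p x * Real.exp (l0 * -Real.log (p x))))^3)
            / (S2 - H^2)^3 + 1) * δ ^ 3)) := by
        rw [← Real.exp_nat_mul, ← Real.exp_add]
        congr 1
        ring
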